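/- Let U ⊆ ℂ^N be open and S a finite index set. Let a = (a_{m,n}) and b = (b_{m,n}) be families of holomorphic functions U → ℂ indexed by m ∈ ℕ^S and n ∈ ℕ, each satisfying condition (O^{y,z}). Then the family c = (c_{m,n}) defined by the convolution c_{m,n} = Σ_{m₁+m₂=m, n₁+n₂=n} a_{m₁,n₁} · b_{m₂,n₂} again satisfies condition (O^{y,z}). In other words, the space O^{y,z}_λ(U) is closed under multiplication of formal power series Σ a_{m,n} y^m z^n. -/

import Mathlib

/-- The total degree `|m| = ∑_s m_s` of a multi-index `m ∈ ℕ^S`. -/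
def wtF {S : Type*} (m : S →₀ ℕ) : ℕ := m.sum fun _ v => v

/-- Condition `(O^{y,z})` on a family of functions `a_{m,n} : U → ℂ` (`m ∈ ℕ^S`, `n ∈ ℕ`):
there exists a continuous `C : U → [1, ∞)` such that
`|a_{m,n}(λ)| ≤ C(λ)^{|m|+n+1} · |m|^n` for all `λ ∈ U`
(with the convention `|m|^n = 1` when `|m| = n = 0`, which is the value of the
natural power `(|m| : ℝ) ^ n` at `|m| = n = 0`). -/
def CondOyz {N : ℕ} {S : Type*} (U : Set (Fin N → ℂ))
    (a : (S →₀ ℕ) → ℕ → (Fin N → ℂ) → ℂ) : Prop :=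
  ∃ C : (Fin N → ℂ) → ℝ, ContinuousOn C U ∧ (∀ x ∈ U, 1 ≤ C x) ∧
    ∀ (m : S →₀ ℕ) (n : ℕ), ∀ x ∈ U, ‖a m n x‖ ≤
      C x ^ (wtF m + n + 1) * (wtF m : ℝ) ^ n

lemma wtF_add {S : Type*} [DecidableEq S] (m₁ m₂ : S →₀ ℕ) : wtF (m₁ + m₂) = wtF m₁ + wtF m₂ := by
  exact Finsupp.sum_add_index (fun _ _ => rfl) (fun _ _ _ _ => rfl)

lemma card_antidiag_le {S : Type*} [DecidableEq S] (m : S →₀ ℕ) :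
    (Finset.HasAntidiagonal.antidiagonal m).card ≤ 2 ^ wtF m := by
  have h1 : (Finset.HasAntidiagonal.antidiagonal m).card ≤
      Multiset.card ((Finsupp.toMultiset m).antidiagonal.map
        (Prod.map Multiset.toFinsupp Multiset.toFinsupp)) := by
    show (Finsupp.antidiagonal' m).support.card ≤ _
    unfold Finsupp.antidiagonal'
    rw [Multiset.toFinsupp_support]
    exact Multiset.toFinset_card_le _
  rw [Multiset.card_map, Multiset.card_antidiagonal, Finsupp.card_toMultiset] at h1
  exact h1

lemma aux_pow (e1 e2 n1 n2 : ℕ) :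
    ((e1 : ℝ)) ^ n1 * (e2 : ℝ) ^ n2 ≤ ((e1 + e2 : ℕ) : ℝ) ^ (n1 + n2) := by
  rcases Nat.eq_zero_or_pos (e1 + e2) with h | h
  · obtain ⟨h1, h2⟩ := Nat.add_eq_zero.mp h
    subst h1; subst h2
    cases n1 with
    | zero => simp
    | succ k => simp [pow_succ]
  · have hM : (0:ℝ) ≤ ((e1 + e2 : ℕ) : ℝ) := by positivity
    calc ((e1:ℝ)) ^ n1 * (e2:ℝ) ^ n2
        ≤ ((e1 + e2 : ℕ) : ℝ) ^ n1 * ((e1 + e2 : ℕ) : ℝ) ^ n2 := by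
          apply mul_le_mul
          · exact pow_le_pow_left₀ (by positivity) (by exact_mod_cast Nat.le_add_right e1 e2) n1
          · exact pow_le_pow_left₀ (by positivity) (by exact_mod_cast Nat.le_add_left e2 e1) n2
          · positivity
          · positivity
      _ = ((e1 + e2 : ℕ) : ℝ) ^ (n1 + n2) := (pow_add _ _ _).symm

/-- If `a` and `b` are families of holomorphic functions on `U` satisfying
condition `(O^{y,z})`, then the convolution family
`c_{m,n} = ∑_{m₁+m₂=m, n₁+n₂=n} a_{m₁,n₁} · b_{m₂,n₂}` again satisfies `(O^{y,z})`:
the space `O^{y,z}_λ(U)` is closed under multiplication of formal power series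
`∑ a_{m,n} y^m z^n`. -/
theorem stmt_5 {N : ℕ} {S : Type*} [DecidableEq S] (U : Set (Fin N → ℂ))
    (a b : (S →₀ ℕ) → ℕ → (Fin N → ℂ) → ℂ)
    (haH : ∀ m n, DifferentiableOn ℂ (a m n) U)
    (hbH : ∀ m n, DifferentiableOn ℂ (b m n) U)
    (ha : CondOyz U a) (hb : CondOyz U b) :
    CondOyz U (fun m n x =>
      ∑ p ∈ Finset.HasAntidiagonal.antidiagonal m, ∑ pn ∈ Finset.HasAntidiagonal.antidiagonal n,
        a p.1 pn.1 x * b p.2 pn.2 x) := by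
  obtain ⟨Ca, hCa, hCa1, hCaB⟩ := ha
  obtain ⟨Cb, hCb, hCb1, hCbB⟩ := hb
  refine ⟨fun x => 2 * max (Ca x) (Cb x) ^ 2, continuousOn_const.mul ((hCa.sup hCb).pow 2), ?_, ?_⟩
  · intro x hx
    have h2 : 1 ≤ max (Ca x) (Cb x) := le_trans (hCa1 x hx) (le_max_left _ _)
    have h3 : 1 ≤ max (Ca x) (Cb x) ^ 2 := one_le_pow₀ h2
    show (1:ℝ) ≤ 2 * max (Ca x) (Cb x) ^ 2
    linarith
  · intro m n x hx
    set D := max (Ca x) (Cb x) with hDdef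
    have hD1 : 1 ≤ D := le_trans (hCa1 x hx) (le_max_left _ _)
    have hD0 : (0:ℝ) ≤ D := by linarith
    set B : ℝ := D ^ (wtF m + n + 2) * (wtF m : ℝ) ^ n with hBdef
    have hB0 : 0 ≤ B := by positivity
    have hterm : ∀ p ∈ Finset.HasAntidiagonal.antidiagonal m, ∀ pn ∈ Finset.HasAntidiagonal.antidiagonal n,
        ‖a p.1 pn.1 x * b p.2 pn.2 x‖ ≤ B := by
      intro p hp pn hpn
      rw [Finset.HasAntidiagonal.mem_antidiagonal] at hp hpn
      rw [norm_mul]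
      have hA := hCaB p.1 pn.1 x hx
      have hB := hCbB p.2 pn.2 x hx
      have hA' : ‖a p.1 pn.1 x‖ ≤ D ^ (wtF p.1 + pn.1 + 1) * (wtF p.1 : ℝ) ^ pn.1 := by
        refine hA.trans (mul_le_mul_of_nonneg_right ?_ (by positivity))
        exact pow_le_pow_left₀ (le_trans zero_le_one (hCa1 x hx)) (le_max_left _ _) _
      have hB' : ‖b p.2 pn.2 x‖ ≤ D ^ (wtF p.2 + pn.2 + 1) * (wtF p.2 : ℝ) ^ pn.2 := by
        refine hB.trans (mul_le_mul_of_nonneg_right ?_ (by positivity))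
        exact pow_le_pow_left₀ (le_trans zero_le_one (hCb1 x hx)) (le_max_right _ _) _
      calc ‖a p.1 pn.1 x‖ * ‖b p.2 pn.2 x‖
          ≤ (D ^ (wtF p.1 + pn.1 + 1) * (wtF p.1 : ℝ) ^ pn.1) *
            (D ^ (wtF p.2 + pn.2 + 1) * (wtF p.2 : ℝ) ^ pn.2) := by
            apply mul_le_mul hA' hB' (norm_nonneg _) (by positivity)
        _ = D ^ ((wtF p.1 + pn.1 + 1) + (wtF p.2 + pn.2 + 1)) *
            ((wtF p.1 : ℝ) ^ pn.1 * (wtF p.2 : ℝ) ^ pn.2) := by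
            rw [pow_add]; ring
        _ ≤ B := by
            rw [hBdef]
            have he : (wtF p.1 + pn.1 + 1) + (wtF p.2 + pn.2 + 1) = wtF m + n + 2 := by
              have : wtF p.1 + wtF p.2 = wtF m := by rw [← wtF_add, hp]
              omega
            rw [he]
            apply mul_le_mul_of_nonneg_left _ (by positivity)
            have h2 : wtF p.1 + wtF p.2 = wtF m := by rw [← wtF_add, hp]
            have := aux_pow (wtF p.1) (wtF p.2) pn.1 pn.2
            rwa [h2, hpn] at this
    have hsum : ‖∑ p ∈ Finset.HasAntidiagonal.antidiagonal m, ∑ pn ∈ Finset.HasAntidiagonal.antidiagonal n,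
        a p.1 pn.1 x * b p.2 pn.2 x‖ ≤
        ((Finset.HasAntidiagonal.antidiagonal m).card : ℝ) * ((n + 1 : ℕ) * B) := by
      have hinner : ∀ p ∈ Finset.HasAntidiagonal.antidiagonal m,
          ‖∑ pn ∈ Finset.HasAntidiagonal.antidiagonal n, a p.1 pn.1 x * b p.2 pn.2 x‖ ≤
            ((n + 1 : ℕ) : ℝ) * B := by
        intro p hp
        refine (norm_sum_le _ _).trans ?_
        have h := Finset.sum_le_card_nsmul (Finset.HasAntidiagonal.antidiagonal n) _ B
          (fun pn hpn => hterm p hp pn hpn)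
        rwa [Finset.Nat.card_antidiagonal, nsmul_eq_mul] at h
      refine (norm_sum_le _ _).trans ?_
      have h := Finset.sum_le_card_nsmul (Finset.HasAntidiagonal.antidiagonal m) _ (((n + 1 : ℕ) : ℝ) * B) hinner
      rwa [nsmul_eq_mul] at h
    refine hsum.trans ?_
    have hMn0 : (0:ℝ) ≤ (wtF m : ℝ) ^ n := by positivity
    have hcount : ((Finset.HasAntidiagonal.antidiagonal m).card : ℝ) * ((n + 1 : ℕ)) ≤
        (2:ℝ) ^ wtF m * 2 ^ n := by
      apply mul_le_mul
      · exact_mod_cast card_antidiag_le m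
      · exact_mod_cast Nat.lt_two_pow_self (n := n)
      · positivity
      · positivity
    calc ((Finset.HasAntidiagonal.antidiagonal m).card : ℝ) * ((n + 1 : ℕ) * B)
        ≤ ((2:ℝ) ^ wtF m * 2 ^ n) * B := by
          rw [← mul_assoc]
          exact mul_le_mul_of_nonneg_right hcount hB0
      _ = 2 ^ (wtF m + n) * D ^ (wtF m + n + 2) * (wtF m : ℝ) ^ n := by
          rw [hBdef, pow_add]; ring
      _ ≤ 2 ^ (wtF m + n + 1) * D ^ (2 * (wtF m + n + 1)) * (wtF m : ℝ) ^ n := by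
          apply mul_le_mul_of_nonneg_right _ hMn0
          apply mul_le_mul
          · exact pow_le_pow_right₀ one_le_two (by omega)
          · exact pow_le_pow_right₀ hD1 (by omega)
          · positivity
          · positivity
      _ = (2 * D ^ 2) ^ (wtF m + n + 1) * (wtF m : ℝ) ^ n := by
          rw [mul_pow, ← pow_mul]
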